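/- Suppose Ψ has strong convexity parameter μ_Ψ ≥ 0 (f is only assumed convex). Let L > 0 and x ∈ ℝ^n, suppose the descent condition holds at x with constant L, and define g_L(x) = (L + μ_Ψ)(x − T_L(x)). Then for every y ∈ ℝ^n: F(y) ≥ F(T_L(x)) + (1/(2(L + μ_Ψ)))‖g_L(x)‖² + ⟨g_L(x), y − x⟩ + (μ_Ψ/2)‖y − x‖². -/

import Mathlib

open Set
open scoped RealInnerProductSpace

/-- `Euc n` is the Euclidean space `ℝ^n`. -/
abbrev Euc (n : ℕ) := EuclideanSpace ℝ (Fin n)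

open Filter
open scoped Topology

/-- Gradient inequality for a convex differentiable function. -/
lemma my_grad_ineq {n : ℕ} (f : Euc n → ℝ) (g : Euc n)
    (hf : ConvexOn ℝ Set.univ f) (x v : Euc n)
    (hg : HasGradientAt f g x) : f x + ⟪g, v⟫ ≤ f (x + v) := by
  have hconv : ConvexOn ℝ Set.univ (fun t : ℝ => f (x + t • v)) := by
    refine ⟨convex_univ, ?_⟩
    intro s _ t _ a b ha hb hab
    have h := hf.2 (mem_univ (x + s • v)) (mem_univ (x + t • v)) ha hb hab
    have he : a • (x + s • v) + b • (x + t • v) = x + (a • s + b • t) • v := by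
      have hb' : b = 1 - a := by linarith
      subst hb'; simp only [smul_eq_mul]; module
    rw [he] at h
    simpa [smul_eq_mul] using h
  have h1 : HasDerivAt (fun t : ℝ => x + t • v) v 0 := by
    simpa using ((hasDerivAt_id (0 : ℝ)).smul_const v).const_add x
  have hg' : HasFDerivAt f (InnerProductSpace.toDual ℝ (Euc n) g) (x + (0:ℝ) • v) := by
    simpa using hg.hasFDerivAt
  have hderiv : HasDerivAt (fun t : ℝ => f (x + t • v)) ⟪g, v⟫ 0 := by
    have h2 := hg'.comp_hasDerivAt 0 h1
    exact h2
  have hsl := hconv.le_slope_of_hasDerivAt (mem_univ (0:ℝ)) (mem_univ (1:ℝ)) one_pos hderiv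
  rw [slope_def_field] at hsl
  simp only [zero_smul, add_zero, one_smul] at hsl
  have heq : (f (x + v) - f x) / (1 - 0) = f (x + v) - f x := by norm_num
  rw [heq] at hsl
  linarith

set_option maxHeartbeats 1000000 in
/-- Lemma 9: if only `Ψ` has a strong convexity parameter `μ_Ψ ≥ 0`
(`f` merely convex), the descent condition holds at `x` with constant `L > 0`, and
`g_L(x) = (L + μ_Ψ)(x − T_L(x))`, then for every `y`:
`F(y) ≥ F(T_L(x)) + (1/(2(L+μ_Ψ)))‖g_L(x)‖² + ⟨g_L(x), y − x⟩ + (μ_Ψ/2)‖y − x‖²`. -/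
theorem regularizer_sc_composite_lower_bound {n : ℕ}
    (f Ψ F : Euc n → ℝ) (f' : Euc n → Euc n)
    (hf : ConvexOn ℝ Set.univ f)
    (hf' : ∀ z, HasGradientAt f (f' z) z)
    (μΨ : ℝ) (hμΨ : 0 ≤ μΨ)
    (hΨ : StrongConvexOn Set.univ μΨ Ψ)
    (hΨlsc : LowerSemicontinuous Ψ)
    (hF : ∀ z, F z = f z + Ψ z)
    (L : ℝ) (hL : 0 < L) (x T : Euc n)
    (hT : ∀ y, f x + ⟪f' x, T - x⟫ + L / 2 * ‖T - x‖ ^ 2 + Ψ T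
        ≤ f x + ⟪f' x, y - x⟫ + L / 2 * ‖y - x‖ ^ 2 + Ψ y)
    (hdesc : f T ≤ f x + ⟪f' x, T - x⟫ + L / 2 * ‖T - x‖ ^ 2) :
    ∀ y, F y ≥ F T + 1 / (2 * (L + μΨ)) * ‖(L + μΨ) • (x - T)‖ ^ 2
        + ⟪(L + μΨ) • (x - T), y - x⟫ + μΨ / 2 * ‖y - x‖ ^ 2 := by
  intro y
  set d : Euc n := y - T with hd
  -- Step A: for t ∈ (0,1), a bound from optimality of T and strong convexity of Ψ
  have hbound : ∀ t ∈ Ioo (0:ℝ) 1,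
      μΨ * (1 - t) / 2 * ‖d‖ ^ 2
        ≤ (⟪f' x, d⟫ + L * ⟪T - x, d⟫ + (Ψ y - Ψ T)) + L * t / 2 * ‖d‖ ^ 2 := by
    intro t ht
    have hz : (1 - t) • T + t • y = T + t • d := by rw [hd]; module
    have hΨt := hΨ.2 (mem_univ T) (mem_univ y) (by linarith [ht.2] : (0:ℝ) ≤ 1 - t)
      (le_of_lt ht.1) (by ring)
    rw [hz] at hΨt
    have hTy : ‖T - y‖ = ‖d‖ := by rw [hd, norm_sub_rev]
    rw [hTy] at hΨt
    have hopt := hT (T + t • d)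
    have he1 : T + t • d - x = (T - x) + t • d := by module
    rw [he1] at hopt
    rw [inner_add_right, real_inner_smul_right] at hopt
    rw [norm_add_sq_real, real_inner_smul_right, norm_smul] at hopt
    simp only [Real.norm_eq_abs, smul_eq_mul] at hΨt hopt
    have habs : |t| = t := abs_of_pos ht.1
    rw [habs] at hopt
    have hΨy : Ψ y = Ψ (T + d) := by rw [hd]; congr 1; module
    nlinarith [ht.1, ht.2, sq_nonneg ‖d‖, mul_pos ht.1 (sub_pos.mpr ht.2)]
  -- Step A': take t → 0⁺
  have key : μΨ / 2 * ‖d‖ ^ 2 ≤ ⟪f' x, d⟫ + L * ⟪T - x, d⟫ + (Ψ y - Ψ T) := by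
    set A : ℝ := ⟪f' x, d⟫ + L * ⟪T - x, d⟫ + (Ψ y - Ψ T) with hA
    have hlim : Tendsto (fun t : ℝ => A + L * t / 2 * ‖d‖ ^ 2 - μΨ * (1 - t) / 2 * ‖d‖ ^ 2)
        (𝓝[>] (0:ℝ)) (𝓝 (A - μΨ / 2 * ‖d‖ ^ 2)) := by
      apply Tendsto.mono_left _ nhdsWithin_le_nhds
      have hc : Continuous (fun t : ℝ => A + L * t / 2 * ‖d‖ ^ 2 - μΨ * (1 - t) / 2 * ‖d‖ ^ 2) := by
        fun_prop
      have := hc.tendsto 0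
      convert this using 2
      norm_num
    have hev : ∀ᶠ t in 𝓝[>] (0:ℝ),
        0 ≤ A + L * t / 2 * ‖d‖ ^ 2 - μΨ * (1 - t) / 2 * ‖d‖ ^ 2 := by
      filter_upwards [Ioo_mem_nhdsGT_of_mem (by norm_num : (0:ℝ) ∈ Ico (0:ℝ) 1)] with t ht
      linarith [hbound t ht]
    have := ge_of_tendsto hlim hev
    linarith
  -- Step B: gradient inequality for f at x, and combine
  have hgrad : f x + ⟪f' x, y - x⟫ ≤ f y := by
    have := my_grad_ineq f (f' x) hf x (y - x) (hf' x)
    simpa using this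
  -- inner product / norm identities
  have e1 : d = (y - x) + (x - T) := by rw [hd]; module
  have h1 : ⟪f' x, d⟫ = ⟪f' x, y - x⟫ + ⟪f' x, x - T⟫ := by rw [e1, inner_add_right]
  have h1' : ⟪f' x, x - T⟫ = -⟪f' x, T - x⟫ := by
    rw [show x - T = -(T - x) by module, inner_neg_right]
  have h2 : ⟪T - x, d⟫ = ⟪T - x, y - x⟫ + ⟪T - x, x - T⟫ := by rw [e1, inner_add_right]
  have h2a : ⟪T - x, y - x⟫ = -⟪x - T, y - x⟫ := by
    rw [show T - x = -(x - T) by module, inner_neg_left]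
  have h2b : ⟪T - x, x - T⟫ = -‖x - T‖ ^ 2 := by
    rw [show T - x = -(x - T) by module, inner_neg_left, real_inner_self_eq_norm_sq]
  have h3 : ‖d‖ ^ 2 = ‖y - x‖ ^ 2 + 2 * ⟪y - x, x - T⟫ + ‖x - T‖ ^ 2 := by
    rw [e1, norm_add_sq_real]
  have h4 : ⟪y - x, x - T⟫ = ⟪x - T, y - x⟫ := real_inner_comm _ _
  -- goal rewriting
  have hLμ : (0:ℝ) < L + μΨ := by linarith
  have hnorm : ‖(L + μΨ) • (x - T)‖ ^ 2 = (L + μΨ) ^ 2 * ‖x - T‖ ^ 2 := by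
    rw [norm_smul, Real.norm_eq_abs, abs_of_pos hLμ, mul_pow]
  have hinner : ⟪(L + μΨ) • (x - T), y - x⟫ = (L + μΨ) * ⟪x - T, y - x⟫ :=
    real_inner_smul_left _ _ _
  have hcoef : 1 / (2 * (L + μΨ)) * ((L + μΨ) ^ 2 * ‖x - T‖ ^ 2)
      = (L + μΨ) / 2 * ‖x - T‖ ^ 2 := by
    field_simp
  have h5 : ‖T - x‖ ^ 2 = ‖x - T‖ ^ 2 := by rw [norm_sub_rev]
  rw [h1, h1', h2, h2a, h2b, h3, h4] at key
  rw [h5] at hdesc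
  rw [hF y, hF T, hnorm, hinner, hcoef]
  nlinarith [key, hgrad, hdesc]
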